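/- For any integer n ≥ 2 and any integer c, the number φ_2(n, c) of pairs of exceptional units of ℤ_n summing to c modulo n equals the product over all prime powers p^α exactly dividing n of φ^{∗∗}(p^α, c), where φ^{∗∗}(2^α, c) = 0; φ^{∗∗}(3^α, c) = 3^{α-1} if c ≡ 1 (mod 3) and 0 otherwise; and for p ≥ 5, φ^{∗∗}(p^α, c) = p^{α-1}(p-2) if c ≡ 1 (mod p), p^{α-1}(p-3) if c ≡ 0 (mod p) or c ≡ 2 (mod p), and p^{α-1}(p-4) otherwise. -/

import Mathlib

/-- `phi k n c` is the number of `k`-tuples of exceptional units of `ℤ/nℤ`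
(i.e. elements `u` with both `u` and `1 - u` units) summing to `c` modulo `n`. -/
noncomputable def phi (k n : ℕ) (c : ℤ) : ℕ :=
  Nat.card {x : Fin k → ZMod n //
    (∀ i, IsUnit (x i) ∧ IsUnit (1 - x i)) ∧ ∑ i, x i = (c : ZMod n)}

/-- Sander's function `φ**(p^α, c)` on prime powers. -/
def phiStar (p α : ℕ) (c : ℤ) : ℕ :=
  if p = 2 then 0
  else if p = 3 then (if c % 3 = 1 then 3 ^ (α - 1) else 0)
  else if c % p = 1 then p ^ (α - 1) * (p - 2)
  else if c % p = 0 ∨ c % p = 2 then p ^ (α - 1) * (p - 3)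
  else p ^ (α - 1) * (p - 4)


def EU (n : ℕ) (c : ℤ) (x : ZMod n) : Prop :=
  IsUnit x ∧ IsUnit (1 - x) ∧ IsUnit ((c : ZMod n) - x) ∧ IsUnit (1 - ((c : ZMod n) - x))

def phiTwoEquiv (n : ℕ) (c : ℤ) :
    {x : Fin 2 → ZMod n //
      (∀ i, IsUnit (x i) ∧ IsUnit (1 - x i)) ∧ ∑ i, x i = (c : ZMod n)} ≃
    {x : ZMod n // EU n c x} where
  toFun x := ⟨x.1 0, by
    obtain ⟨h1, h2⟩ := x.2
    rw [Fin.sum_univ_two] at h2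
    have hx1 : (c : ZMod n) - x.1 0 = x.1 1 := by linear_combination -h2
    exact ⟨(h1 0).1, (h1 0).2, hx1 ▸ (h1 1).1, hx1 ▸ (h1 1).2⟩⟩
  invFun y := ⟨![y.1, (c : ZMod n) - y.1], by
    obtain ⟨u1, u2, u3, u4⟩ := y.2
    refine ⟨fun i => ?_, by rw [Fin.sum_univ_two]; simp⟩
    fin_cases i <;> simp [u1, u2, u3, u4]⟩
  left_inv x := by
    obtain ⟨x, h1, h2⟩ := x
    rw [Fin.sum_univ_two] at h2
    ext i
    fin_cases i <;> simp [← h2]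
  right_inv y := by ext; simp

lemma phi_two_eq (n : ℕ) (c : ℤ) : phi 2 n c = Nat.card {x : ZMod n // EU n c x} :=
  Nat.card_congr (phiTwoEquiv n c)

section Local
variable {p α : ℕ} [hp : Fact p.Prime]

lemma neZero_ppow (hα : α ≠ 0) : NeZero (p ^ α) := ⟨pow_ne_zero _ hp.out.ne_zero⟩

lemma isUnit_zmod_pow_iff (hα : α ≠ 0) (x : ZMod (p ^ α)) :
    IsUnit x ↔ ZMod.castHom (dvd_pow_self p hα) (ZMod p) x ≠ 0 := by
  haveI := neZero_ppow (p := p) hα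
  obtain ⟨m, rfl⟩ := ZMod.natCast_zmod_surjective x
  rw [map_natCast, ZMod.isUnit_iff_coprime, Ne, ZMod.natCast_eq_zero_iff,
    ← hp.out.coprime_iff_not_dvd, Nat.coprime_comm]
  exact Nat.coprime_pow_left_iff (Nat.pos_of_ne_zero hα) _ _

lemma fiber_card (hα : α ≠ 0) (y : ZMod p) :
    (Finset.univ.filter fun x : ZMod (p ^ α) =>
      ZMod.castHom (dvd_pow_self p hα) (ZMod p) x = y).card = p ^ (α - 1) := by
  classical
  haveI := neZero_ppow (p := p) hα
  set f := ZMod.castHom (dvd_pow_self p hα) (ZMod p) with hf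
  have hsurj : Function.Surjective f := by
    intro z
    obtain ⟨m, rfl⟩ := ZMod.natCast_zmod_surjective z
    exact ⟨m, map_natCast f m⟩
  have hcard : ∀ y z : ZMod p,
      (Finset.univ.filter fun x => f x = y).card =
      (Finset.univ.filter fun x => f x = z).card := by
    intro y z
    obtain ⟨d, hd⟩ := hsurj (z - y)
    apply Finset.card_bij (fun x _ => x + d)
    · intro a ha
      simp only [Finset.mem_filter, Finset.mem_univ, true_and] at ha ⊢
      rw [map_add, ha, hd]; ring
    · intro a _ b _ h
      exact add_right_cancel h
    · intro b hb
      simp only [Finset.mem_filter, Finset.mem_univ, true_and] at hb ⊢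
      exact ⟨b - d, by rw [map_sub, hb, hd]; ring, by ring⟩
  have htot : ∑ z : ZMod p, (Finset.univ.filter fun x => f x = z).card = p ^ α := by
    rw [← Finset.card_eq_sum_card_fiberwise (fun x _ => Finset.mem_univ (f x)),
      Finset.card_univ, ZMod.card]
  have hconst : ∑ z : ZMod p, (Finset.univ.filter fun x => f x = z).card =
      p * (Finset.univ.filter fun x => f x = y).card := by
    rw [Finset.sum_congr rfl fun z _ => hcard z y, Finset.sum_const, Finset.card_univ,
      ZMod.card, smul_eq_mul]
  have hpow : p * p ^ (α - 1) = p ^ α := by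
    rw [← pow_succ', Nat.sub_add_cancel (Nat.one_le_iff_ne_zero.2 hα)]
  exact Nat.eq_of_mul_eq_mul_left hp.out.pos (by rw [← hconst, htot, ← hpow])

end Local

lemma local_count {p α : ℕ} [hp : Fact p.Prime] (hα : α ≠ 0) (c : ℤ) :
    Nat.card {x : ZMod (p ^ α) // EU (p ^ α) c x} =
      p ^ (α - 1) * (p - ({0, 1, (c : ZMod p), (c : ZMod p) - 1} : Finset (ZMod p)).card) := by
  classical
  haveI := neZero_ppow (p := p) hα
  set f := ZMod.castHom (dvd_pow_self p hα) (ZMod p) with hf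
  set s : Finset (ZMod p) := {0, 1, (c : ZMod p), (c : ZMod p) - 1} with hs
  have hEU : ∀ x : ZMod (p ^ α), EU (p ^ α) c x ↔ f x ∈ sᶜ := by
    intro x
    rw [Finset.mem_compl, hs]
    simp only [EU, isUnit_zmod_pow_iff hα, Finset.mem_insert, Finset.mem_singleton, not_or,
      map_sub, map_one, map_intCast]
    have e2 : (1 : ZMod p) - f x ≠ 0 ↔ f x ≠ 1 := by rw [sub_ne_zero]; exact ne_comm
    have e3 : (c : ZMod p) - f x ≠ 0 ↔ f x ≠ (c : ZMod p) := by rw [sub_ne_zero]; exact ne_comm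
    have e4 : (1 : ZMod p) - ((c : ZMod p) - f x) ≠ 0 ↔ f x ≠ (c : ZMod p) - 1 := by
      rw [show (1 : ZMod p) - ((c : ZMod p) - f x) = f x - ((c : ZMod p) - 1) by ring,
        sub_ne_zero]
    rw [e2, e3, e4]
  have hfib : ∀ y ∈ sᶜ, ((Finset.univ.filter fun x : ZMod (p ^ α) => f x ∈ sᶜ).filter
      fun x => f x = y).card = p ^ (α - 1) := by
    intro y hy
    rw [Finset.filter_filter, ← fiber_card (p := p) hα y]
    congr 1
    apply Finset.filter_congr
    intro x _
    exact ⟨fun h => h.2, fun h => ⟨h ▸ hy, h⟩⟩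
  have hsum : (Finset.univ.filter fun x : ZMod (p ^ α) => f x ∈ sᶜ).card =
      ∑ y ∈ sᶜ, ((Finset.univ.filter fun x : ZMod (p ^ α) => f x ∈ sᶜ).filter
        fun x => f x = y).card :=
    Finset.card_eq_sum_card_fiberwise fun x hx => (Finset.mem_filter.1 hx).2
  rw [Nat.card_congr (Equiv.subtypeEquivRight hEU), Nat.card_eq_fintype_card,
    Fintype.card_subtype, hsum, Finset.sum_congr rfl hfib, Finset.sum_const, smul_eq_mul,
    Finset.card_compl, ZMod.card, mul_comm]

lemma card_eq_phiStar {p : ℕ} (α : ℕ) [hp : Fact p.Prime] (c : ℤ) :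
    p ^ (α - 1) * (p - ({0, 1, (c : ZMod p), (c : ZMod p) - 1} : Finset (ZMod p)).card) =
      phiStar p α c := by
  classical
  haveI : NeZero p := ⟨hp.out.ne_zero⟩
  have hp2 : 2 ≤ p := hp.out.two_le
  have hq0 : 0 ≤ c % p := Int.emod_nonneg c (by exact_mod_cast hp.out.ne_zero)
  have hqlt : c % p < p := Int.emod_lt_of_pos c (by exact_mod_cast hp.out.pos)
  have key : ∀ r : ℤ, 0 ≤ r → r < p → ((c : ZMod p) = (r : ZMod p) ↔ c % p = r) := by
    intro r h0 h1
    rw [ZMod.intCast_eq_intCast_iff, Int.ModEq, Int.emod_eq_of_lt h0 h1]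
  by_cases hP2 : p = 2
  · subst hP2
    have hne : (0 : ZMod 2) ≠ 1 := zero_ne_one
    have h2le : 2 ≤ ({0, 1, (c : ZMod 2), (c : ZMod 2) - 1} : Finset (ZMod 2)).card :=
      Finset.one_lt_card.2 ⟨0, by simp, 1, by simp, hne⟩
    rw [Nat.sub_eq_zero_of_le h2le, mul_zero]
    simp [phiStar]
  have hp3 : 3 ≤ p := by
    rcases Nat.lt_or_ge p 3 with h | h
    · interval_cases p <;> simp_all
    · exact h
  haveI : Nontrivial (ZMod p) := ZMod.nontrivial p
  have h01 : (0 : ZMod p) ≠ 1 := zero_ne_one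
  have h2ne : (2 : ZMod p) ≠ 0 := by
    intro h
    have hdvd : p ∣ 2 := (ZMod.natCast_eq_zero_iff 2 p).1 (by exact_mod_cast h)
    exact absurd (Nat.le_of_dvd (by norm_num) hdvd) (by omega)
  by_cases hc1 : c % p = 1
  · have hcp : (c : ZMod p) = 1 := by
      simpa using (key 1 (by norm_num) (by exact_mod_cast hp2)).mpr hc1
    have hset : ({0, 1, (c : ZMod p), (c : ZMod p) - 1} : Finset (ZMod p)) = {0, 1} := by
      rw [hcp]
      ext z
      simp only [Finset.mem_insert, Finset.mem_singleton, sub_self]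
      tauto
    rw [hset, Finset.card_pair h01]
    by_cases hP3 : p = 3
    · subst hP3
      have hc1' : c % (3:ℤ) = 1 := by exact_mod_cast hc1
      simp [phiStar, hc1']
    · simp only [phiStar, if_neg hP2, if_neg hP3, if_pos hc1]
  by_cases hc0 : c % p = 0
  · have hcp : (c : ZMod p) = 0 := by
      simpa using (key 0 le_rfl (by exact_mod_cast hp.out.pos)).mpr hc0
    have hm1 : (-1 : ZMod p) ≠ 0 := by
      rw [neg_ne_zero]; exact h01.symm
    have hm1' : (1 : ZMod p) ≠ -1 := by
      intro h; exact h2ne (by linear_combination h)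
    have hset : ({0, 1, (c : ZMod p), (c : ZMod p) - 1} : Finset (ZMod p)) = {0, 1, -1} := by
      rw [hcp]
      ext z
      simp only [Finset.mem_insert, Finset.mem_singleton, zero_sub]
      tauto
    have hcard : ({0, 1, -1} : Finset (ZMod p)).card = 3 := by
      rw [Finset.card_insert_of_notMem (by simp [h01, hm1.symm]),
        Finset.card_insert_of_notMem (by simp [hm1']), Finset.card_singleton]
    rw [hset, hcard]
    by_cases hP3 : p = 3
    · subst hP3
      have hc1' : ¬ c % (3:ℤ) = 1 := by push_cast at hc0 ⊢; omega
      simp [phiStar, hc1']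
    · simp only [phiStar, if_neg hP2, if_neg hP3, if_neg hc1, if_pos (Or.inl hc0)]
  by_cases hc2 : c % p = 2
  · have hcp : (c : ZMod p) = 2 := by
      simpa using (key 2 (by norm_num) (by exact_mod_cast hp3)).mpr hc2
    have h21 : (2 : ZMod p) ≠ 1 := by
      intro h; exact h01 (by linear_combination -h)
    have hset : ({0, 1, (c : ZMod p), (c : ZMod p) - 1} : Finset (ZMod p)) = {0, 1, 2} := by
      rw [hcp, show (2 : ZMod p) - 1 = 1 by ring]
      ext z
      simp only [Finset.mem_insert, Finset.mem_singleton]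
      tauto
    have hcard : ({0, 1, 2} : Finset (ZMod p)).card = 3 := by
      rw [Finset.card_insert_of_notMem (by simp [h01, h2ne.symm]),
        Finset.card_insert_of_notMem (by simp [h21.symm]), Finset.card_singleton]
    rw [hset, hcard]
    by_cases hP3 : p = 3
    · subst hP3
      have hc1' : ¬ c % (3:ℤ) = 1 := by push_cast at hc2 ⊢; omega
      simp [phiStar, hc1']
    · simp only [phiStar, if_neg hP2, if_neg hP3, if_neg hc1, if_pos (Or.inr hc2)]
  -- generic case
  have hP3 : p ≠ 3 := by
    intro h; subst h
    omega
  have hcp0 : (c : ZMod p) ≠ 0 := fun h => hc0 ((key 0 le_rfl (by exact_mod_cast hp.out.pos)).mp (by simpa using h))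
  have hcp1 : (c : ZMod p) ≠ 1 := fun h => hc1 ((key 1 (by norm_num) (by exact_mod_cast hp2)).mp (by simpa using h))
  have hcp2 : (c : ZMod p) ≠ 2 := fun h => hc2 ((key 2 (by norm_num) (by exact_mod_cast hp3)).mp (by simpa using h))
  have hd1 : (1 : ZMod p) ≠ (c : ZMod p) - 1 := by
    intro h; exact hcp2 (by linear_combination -h)
  have hd0 : (0 : ZMod p) ≠ (c : ZMod p) - 1 := by
    intro h; exact hcp1 (by linear_combination -h)
  have hdc : (c : ZMod p) ≠ (c : ZMod p) - 1 := by
    intro h; exact h01 (by linear_combination -h)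
  have hcard : ({0, 1, (c : ZMod p), (c : ZMod p) - 1} : Finset (ZMod p)).card = 4 := by
    rw [Finset.card_insert_of_notMem (by simp [h01, hcp0.symm, hd0]),
      Finset.card_insert_of_notMem (by simp [hcp1.symm, hd1]),
      Finset.card_insert_of_notMem (by simp [hdc]), Finset.card_singleton]
  rw [hcard]
  simp only [phiStar, if_neg hP2, if_neg hP3, if_neg hc1, if_neg (by tauto : ¬ (c % (p:ℕ) = 0 ∨ c % (p:ℕ) = 2))]


lemma pi_isUnit_iff {ι : Type*} {M : ι → Type*} [∀ i, Monoid (M i)] (f : ∀ i, M i) :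
    IsUnit f ↔ ∀ i, IsUnit (f i) := by
  constructor
  · rintro ⟨u, rfl⟩ i
    exact ⟨⟨u.val i, u.inv i, congrFun u.val_inv i, congrFun u.inv_val i⟩, rfl⟩
  · intro h
    refine isUnit_iff_exists.2 ⟨fun i => ((h i).unit⁻¹ : _), ?_, ?_⟩ <;>
      funext i <;> simp

lemma ringEquiv_isUnit_iff {R S : Type*} [Ring R] [Ring S] (e : R ≃+* S) (x : R) :
    IsUnit (e x) ↔ IsUnit x :=
  ⟨fun h => by simpa using h.map e.symm.toRingHom, fun h => h.map e.toRingHom⟩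

theorem sander_theorem (n : ℕ) (hn : 2 ≤ n) (c : ℤ) :
    phi 2 n c = ∏ p ∈ n.primeFactors, phiStar p (n.factorization p) c := by
  classical
  have hn0 : n ≠ 0 := by omega
  set s := n.primeFactors with hs
  set a : ↥s → ℕ := fun i => (i : ℕ) ^ n.factorization i with ha
  have hprod : ∏ i : ↥s, a i = n := by
    exact (Finset.prod_coe_sort s fun p => p ^ n.factorization p).trans
      (Nat.factorization_prod_pow_eq_self hn0)
  have copr : Pairwise (Function.onFun Nat.Coprime a) := by
    intro i j hij
    have hi : (i : ℕ).Prime := Nat.prime_of_mem_primeFactors i.2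
    have hj : (j : ℕ).Prime := Nat.prime_of_mem_primeFactors j.2
    have hne : (i : ℕ) ≠ (j : ℕ) := fun h => hij (Subtype.ext h)
    exact Nat.Coprime.pow _ _ ((Nat.coprime_primes hi hj).2 hne)
  let e : ZMod n ≃+* ∀ i : ↥s, ZMod (a i) :=
    (ZMod.ringEquivCongr hprod.symm).trans (ZMod.prodEquivPi a copr)
  have hEU_iff : ∀ x : ZMod n, EU n c x ↔ ∀ i, EU (a i) c (e x i) := by
    intro x
    simp only [EU]
    have h1 : IsUnit x ↔ ∀ i, IsUnit (e x i) := by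
      rw [← ringEquiv_isUnit_iff e x, pi_isUnit_iff]
    have h2 : IsUnit (1 - x) ↔ ∀ i, IsUnit (1 - e x i) := by
      rw [← ringEquiv_isUnit_iff e _, pi_isUnit_iff]
      simp [map_sub]
    have h3 : IsUnit ((c : ZMod n) - x) ↔ ∀ i, IsUnit ((c : ZMod (a i)) - e x i) := by
      rw [← ringEquiv_isUnit_iff e _, pi_isUnit_iff]
      simp [map_sub]
    have h4 : IsUnit (1 - ((c : ZMod n) - x)) ↔
        ∀ i, IsUnit (1 - ((c : ZMod (a i)) - e x i)) := by
      rw [← ringEquiv_isUnit_iff e _, pi_isUnit_iff]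
      simp [map_sub]
    rw [h1, h2, h3, h4]
    exact ⟨fun ⟨a1, a2, a3, a4⟩ i => ⟨a1 i, a2 i, a3 i, a4 i⟩,
      fun h => ⟨fun i => (h i).1, fun i => (h i).2.1, fun i => (h i).2.2.1,
        fun i => (h i).2.2.2⟩⟩
  rw [phi_two_eq,
    Nat.card_congr ((e.toEquiv.subtypeEquiv fun x => hEU_iff x).trans Equiv.subtypePiEquivPi),
    Nat.card_pi, ← Finset.prod_coe_sort s (fun p => phiStar p (n.factorization p) c)]
  apply Finset.prod_congr rfl
  intro i _
  have hpi : (i : ℕ).Prime := Nat.prime_of_mem_primeFactors i.2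
  haveI : Fact (i : ℕ).Prime := ⟨hpi⟩
  have hα : n.factorization i ≠ 0 :=
    (Nat.Prime.factorization_pos_of_dvd hpi hn0 (Nat.dvd_of_mem_primeFactors i.2)).ne'
  exact (local_count hα c).trans (card_eq_phiStar _ c)
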